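/- The map (p,q) ↦ q̇ given by q̇ = (det A/(q,Aq))·[A^{-1}p − (p,A^{-1}q)q] inverts the degenerate Legendre transform p_i = (1/det A)[(q,Aq)A_i q̇_i − (q̇,Aq)A_i q_i] on the constraint set (q,q) = 1, (q,q̇) = 0: substituting this q̇ into the formula for p recovers p, provided (q,p) = 0. -/

import Mathlib

open Matrix

/-- **Inversion of the degenerate Legendre transform on the sphere.** On the
constraint set `(q,q) = 1`, `(q,p) = 0`, substituting
`q̇ = (det A/(q,Aq))·[A⁻¹p − (p,A⁻¹q)q]` into the componentwise momentum map
`p_i = (det A)⁻¹[(q,Aq)A_i q̇_i − (q̇,Aq)A_i q_i]` recovers `p`. -/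
theorem legendre_inversion_on_sphere {n : ℕ}
    (a : Fin n → ℝ) (ha : ∀ i, 0 < a i)
    (A : Matrix (Fin n) (Fin n) ℝ) (hA : A = Matrix.diagonal a)
    (q p : Fin n → ℝ) (hq : q ⬝ᵥ q = 1) (hqp : q ⬝ᵥ p = 0) :
    ∀ i,
      (A.det)⁻¹ *
        ((q ⬝ᵥ A *ᵥ q) * a i *
            ((A.det / (q ⬝ᵥ A *ᵥ q)) •
              (A⁻¹ *ᵥ p - (p ⬝ᵥ A⁻¹ *ᵥ q) • q)) i -
          (((A.det / (q ⬝ᵥ A *ᵥ q)) •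
              (A⁻¹ *ᵥ p - (p ⬝ᵥ A⁻¹ *ᵥ q) • q)) ⬝ᵥ A *ᵥ q) * a i * q i) =
      p i := by
  have hAinv : A⁻¹ = Matrix.diagonal (fun i => (a i)⁻¹) := by
    apply Matrix.inv_eq_right_inv
    rw [hA, Matrix.diagonal_mul_diagonal]
    convert Matrix.diagonal_one with i
    exact mul_inv_cancel₀ (ha i).ne'
  have hdet : A.det = ∏ i, a i := by rw [hA, Matrix.det_diagonal]
  have hd : A.det ≠ 0 := by
    rw [hdet]; exact (Finset.prod_pos (fun i _ => ha i)).ne'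
  have hs : q ⬝ᵥ A *ᵥ q = ∑ i, a i * q i * q i := by
    rw [hA]
    simp [dotProduct, Matrix.mulVec_diagonal]
    exact Finset.sum_congr rfl fun i _ => by ring
  have hspos : 0 < q ⬝ᵥ A *ᵥ q := by
    rw [hs]
    have h1 : ∑ i, q i * q i = 1 := hq
    by_contra h
    push_neg at h
    have hz : ∑ i, a i * q i * q i = 0 := le_antisymm h
      (Finset.sum_nonneg fun i _ => by nlinarith [ha i, sq_nonneg (q i)])
    have : ∀ i ∈ Finset.univ, a i * q i * q i = 0 :=
      (Finset.sum_eq_zero_iff_of_nonneg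
        (fun i _ => by nlinarith [ha i, sq_nonneg (q i)])).mp hz
    have hq0 : ∀ i, q i = 0 := fun i => by
      have h3 := this i (Finset.mem_univ i)
      rcases mul_eq_zero.mp h3 with h4 | h4
      · rcases mul_eq_zero.mp h4 with h5 | h5
        · exact absurd h5 (ha i).ne'
        · exact h5
      · exact h4
    simp [hq0] at h1
  set s := q ⬝ᵥ A *ᵥ q with hsdef
  set d := A.det with hddef
  set c := p ⬝ᵥ A⁻¹ *ᵥ q with hcdef
  -- key orthogonality: (A⁻¹ p) ⬝ (A q) = p ⬝ q = 0
  have horth : (A⁻¹ *ᵥ p) ⬝ᵥ (A *ᵥ q) = 0 := by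
    rw [hAinv, hA, ← hqp, dotProduct_comm]
    simp [dotProduct, Matrix.mulVec_diagonal]
    apply Finset.sum_congr rfl
    intro i _
    have hai := (ha i).ne'
    field_simp
  have hqAq : q ⬝ᵥ (A *ᵥ q) = s := rfl
  intro i
  have hAinvp : (A⁻¹ *ᵥ p) i = (a i)⁻¹ * p i := by
    rw [hAinv, Matrix.mulVec_diagonal]
  have hdot : ((d / s) • (A⁻¹ *ᵥ p - c • q)) ⬝ᵥ A *ᵥ q = -(d * c) := by
    rw [smul_dotProduct, sub_dotProduct, smul_dotProduct, horth, hqAq]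
    field_simp
    simp only [smul_eq_mul, zero_sub, mul_neg, neg_inj]
    rw [div_mul_eq_mul_div, div_eq_iff hspos.ne']
    ring
  rw [hdot]
  simp only [Pi.smul_apply, Pi.sub_apply, Pi.smul_apply, smul_eq_mul, hAinvp]
  have hai := (ha i).ne'
  field_simp
  ring
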